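/- Let m > 0 and q ∈ ℝ³. The cut-off integrals of the commutative second-order integrand diverge logarithmically: there exist constants 0 < c ≤ C and Λ₀ ≥ 2 (depending on m and q) such that for all Λ ≥ Λ₀, c · log Λ ≤ ∫_{‖p‖ ≤ Λ} f_q(p) dp ≤ C · log Λ. -/

import Mathlib

open MeasureTheory

/-- Euclidean three-space. -/
abbrev R3 := EuclideanSpace ℝ (Fin 3)

/-- The one-particle energy `ω(p) = √(‖p‖² + m²)` for `p ∈ ℝ³`. -/
noncomputable def ω3 (m : ℝ) (p : R3) : ℝ := Real.sqrt (‖p‖ ^ 2 + m ^ 2)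

/-- Integrand of the second-order energy correction of the commutative
`φ³` theory. -/
noncomputable def fC (m : ℝ) (q p : R3) : ℝ :=
  1 / (8 * (2 * Real.pi) ^ 6) * (ω3 m p + ω3 m (p + q)) /
    (ω3 m p * ω3 m (p + q) * ω3 m q * ((ω3 m p + ω3 m (p + q)) ^ 2 - (ω3 m q) ^ 2))

set_option maxHeartbeats 1000000


lemma real_key (K m a b s A B Q : ℝ) (hK : 0 < K) (hm : 0 < m)
    (ha : 0 ≤ a) (hb : 0 ≤ b) (hs : 0 ≤ s)
    (hA2 : A^2 = a^2 + m^2) (hB2 : B^2 = b^2 + m^2) (hQ2 : Q^2 = s^2 + m^2)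
    (hA0 : 0 < A) (hB0 : 0 < B) (hQ0 : 0 < Q)
    (hAa : a ≤ A) (hAm : m ≤ A) (hAu : A ≤ a + m)
    (hBb : b ≤ B) (hBm : m ≤ B)
    (ht1 : s ≤ a + b) (ht2 : a - s ≤ b) (ht3 : b ≤ a + s) :
    0 < A * B * Q * ((A+B)^2 - Q^2) ∧
    K * m^3 / ((m+s) * (2*m+s)^2 * Q) * ((a+m)^3)⁻¹
      ≤ K * (A+B) / (A * B * Q * ((A+B)^2 - Q^2)) ∧
    K * (A+B) / (A * B * Q * ((A+B)^2 - Q^2))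
      ≤ 8*K*(2*m+s)*((s+2*m)*(3*m^2+s^2)) / (3*m^4*Q) * ((a+m)^3)⁻¹ := by
  have hAB2 : (A*B)^2 = (a^2+m^2)*(b^2+m^2) := by rw [mul_pow, hA2, hB2]
  have h1sq : (a*b+m^2)^2 ≤ (A*B)^2 := by nlinarith [sq_nonneg (a*m - b*m)]
  have hAB : a*b + m^2 ≤ A*B :=
    le_of_pow_le_pow_left₀ two_ne_zero (mul_nonneg hA0.le hB0.le) h1sq
  set D := (A+B)^2 - Q^2 with hDdef
  have hDexp : D = A^2 + 2*(A*B) + B^2 - Q^2 := by rw [hDdef]; ring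
  have hD3 : 3*m^2 ≤ D := by
    have F := mul_nonneg (sub_nonneg.2 ht1) (by positivity : (0:ℝ) ≤ a+b+s)
    linarith [hAB, hA2, hB2, hQ2, hDexp, F]
  have hD0 : 0 < D := lt_of_lt_of_le (by positivity) hD3
  have hD' : a^2 + 3*m^2 - s^2 ≤ D := by
    linarith [hAB, hA2, hB2, hQ2, hDexp, sq_nonneg b, mul_nonneg ha hb]
  have hA2m : 3*m^2*A^2 = 3*m^2*a^2 + 3*m^4 := by rw [hA2]; ring
  have h8 : 3*m^2*A^2 ≤ D*(3*m^2+s^2) := by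
    rcases le_or_gt (a^2) (s^2) with hcase | hcase
    · have F1 := mul_nonneg (sub_nonneg.2 hD3) (by positivity : (0:ℝ) ≤ 3*m^2+s^2)
      have F2 := mul_nonneg (sq_nonneg m) (sub_nonneg.2 hcase)
      linarith [F1, F2, hA2m, pow_nonneg hm.le 4]
    · have F1 := mul_nonneg (sub_nonneg.2 hD') (by positivity : (0:ℝ) ≤ 3*m^2+s^2)
      have F2 := mul_nonneg (sq_nonneg s) (sub_nonneg.2 hcase.le)
      linarith [F1, F2, hA2m, pow_nonneg hm.le 4]
  have h7 : m*A ≤ (s+2*m)*B := by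
    rcases le_or_gt a (s+m) with hcase | hcase
    · have F1 := mul_nonneg hm.le (sub_nonneg.2 hAu)
      have F2 := mul_nonneg (by positivity : (0:ℝ) ≤ s+2*m) (sub_nonneg.2 hBm)
      have F3 := mul_nonneg hm.le (by linarith : (0:ℝ) ≤ s+m-a)
      linarith [F1, F2, F3]
    · have F1 := mul_nonneg hm.le (sub_nonneg.2 hAu)
      have F2 := mul_nonneg (by positivity : (0:ℝ) ≤ s+m) (by linarith : (0:ℝ) ≤ a-s-m)
      have F3 := mul_nonneg (by positivity : (0:ℝ) ≤ s+2*m) (by linarith : (0:ℝ) ≤ b-(a-s))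
      have F4 := mul_nonneg (by positivity : (0:ℝ) ≤ s+2*m) (sub_nonneg.2 hBb)
      linarith [F1, F2, F3, F4]
  have hBup : B ≤ A + s := by
    have F1 := mul_nonneg (by linarith : (0:ℝ) ≤ a+s-b) (by linarith : (0:ℝ) ≤ a+s+b)
    have F2 := mul_nonneg hs (sub_nonneg.2 hAa)
    have hsq : B^2 ≤ (A+s)^2 := by linarith [F1, F2, hA2, hB2]
    exact le_of_pow_le_pow_left₀ two_ne_zero (by positivity) hsq
  have h1 : B*m ≤ (m+s)*A := by
    linarith [mul_le_mul_of_nonneg_right hBup hm.le, mul_le_mul_of_nonneg_left hAm hs]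
  have h2 : (A+B)*m ≤ (2*m+s)*A := by linarith [h1]
  have h3 : D ≤ (A+B)^2 := by linarith [sq_nonneg Q, hDdef]
  have h4 : D*m^2 ≤ (2*m+s)^2*A^2 := by
    have e1 : ((A+B)*m)^2 ≤ ((2*m+s)*A)^2 := pow_le_pow_left₀ (by positivity) h2 2
    linarith [mul_le_mul_of_nonneg_right h3 (sq_nonneg m), e1]
  have hDnpos : 0 < A*B*Q*D := by positivity
  refine ⟨hDnpos, ?_, ?_⟩
  · have e2 : (B*m)*(D*m^2) ≤ ((m+s)*A)*((2*m+s)^2*A^2) :=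
      mul_le_mul h1 h4 (mul_nonneg hD0.le (sq_nonneg m)) (by positivity)
    have h5 := mul_le_mul_of_nonneg_right e2 (mul_nonneg hA0.le hQ0.le)
    have e3 : A^3 ≤ (a+m)^3 := pow_le_pow_left₀ hA0.le hAu 3
    have h6 := mul_le_mul (by linarith : A ≤ A+B) e3 (by positivity) (by linarith : (0:ℝ) ≤ A+B)
    have heq : K * m^3 / ((m+s) * (2*m+s)^2 * Q) * ((a+m)^3)⁻¹
        = K*m^3 / ((m+s)*(2*m+s)^2*Q*(a+m)^3) := by rw [← div_eq_mul_inv, div_div]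
    rw [heq, div_le_div_iff₀ (by positivity) hDnpos]
    linarith [mul_le_mul_of_nonneg_left h5 hK.le,
      mul_le_mul_of_nonneg_left h6 (by positivity : (0:ℝ) ≤ K*((m+s)*(2*m+s)^2*Q))]
  · have e4 : (m*A)*(3*m^2*A^2) ≤ ((s+2*m)*B)*(D*(3*m^2+s^2)) :=
      mul_le_mul h7 h8 (by positivity) (by positivity)
    have h9 := mul_le_mul_of_nonneg_right e4 (mul_nonneg hQ0.le hA0.le)
    have e5 : (a+m)^3 ≤ (2*A)^3 := pow_le_pow_left₀ (by positivity) (by linarith) 3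
    have h10 := mul_le_mul h2 e5 (by positivity) (by positivity)
    have heq : 8*K*(2*m+s)*((s+2*m)*(3*m^2+s^2)) / (3*m^4*Q) * ((a+m)^3)⁻¹
        = 8*K*(2*m+s)*((s+2*m)*(3*m^2+s^2)) / (3*m^4*Q*(a+m)^3) := by rw [← div_eq_mul_inv, div_div]
    rw [heq, div_le_div_iff₀ hDnpos (by positivity)]
    linarith [mul_le_mul_of_nonneg_left h10 (by positivity : (0:ℝ) ≤ 3*m^3*Q*K),
      mul_le_mul_of_nonneg_left h9 (by positivity : (0:ℝ) ≤ 8*K*(2*m+s))]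

lemma ω3_sq (m : ℝ) (p : R3) : ω3 m p ^ 2 = ‖p‖ ^ 2 + m ^ 2 :=
  Real.sq_sqrt (by positivity)
lemma ω3_pos (m : ℝ) (hm : 0 < m) (p : R3) : 0 < ω3 m p :=
  Real.sqrt_pos.2 (by positivity)
lemma ω3_ge_m (m : ℝ) (hm : 0 < m) (p : R3) : m ≤ ω3 m p := by
  have h := Real.sqrt_le_sqrt (show m ^ 2 ≤ ‖p‖ ^ 2 + m ^ 2 by nlinarith [sq_nonneg ‖p‖])
  rwa [Real.sqrt_sq hm.le] at h
lemma ω3_ge_norm (m : ℝ) (p : R3) : ‖p‖ ≤ ω3 m p := by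
  have h := Real.sqrt_le_sqrt (show ‖p‖ ^ 2 ≤ ‖p‖ ^ 2 + m ^ 2 by nlinarith [sq_nonneg m])
  rwa [Real.sqrt_sq (norm_nonneg _)] at h
lemma ω3_le (m : ℝ) (hm : 0 < m) (p : R3) : ω3 m p ≤ ‖p‖ + m := by
  have h := Real.sqrt_le_sqrt (show ‖p‖ ^ 2 + m ^ 2 ≤ (‖p‖ + m) ^ 2 by nlinarith [norm_nonneg p, hm.le])
  rwa [Real.sqrt_sq (by positivity)] at h
lemma ω3_continuous (m : ℝ) : Continuous (ω3 m) :=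
  Real.continuous_sqrt.comp (by fun_prop)

lemma triangle_facts (q p : R3) : ‖q‖ ≤ ‖p‖ + ‖p+q‖ ∧ ‖p‖ - ‖q‖ ≤ ‖p+q‖ ∧ ‖p+q‖ ≤ ‖p‖ + ‖q‖ := by
  refine ⟨?_, ?_, norm_add_le p q⟩
  · have h : ‖q‖ = ‖(p+q) - p‖ := by congr 1; abel
    rw [h]
    linarith [norm_sub_le (p+q) p]
  · have h : ‖p‖ = ‖(p+q) - q‖ := by congr 1; abel
    rw [h]
    linarith [norm_sub_le (p+q) q]

lemma real_key_inst (m : ℝ) (hm : 0 < m) (q p : R3) :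
    0 < ω3 m p * ω3 m (p+q) * ω3 m q * ((ω3 m p + ω3 m (p+q))^2 - (ω3 m q)^2) ∧
    (1 / (8 * (2 * Real.pi) ^ 6)) * m^3 / ((m+‖q‖) * (2*m+‖q‖)^2 * ω3 m q) * ((‖p‖+m)^3)⁻¹
      ≤ fC m q p ∧
    fC m q p ≤ 8*(1 / (8 * (2 * Real.pi) ^ 6))*(2*m+‖q‖)*((‖q‖+2*m)*(3*m^2+‖q‖^2)) / (3*m^4*ω3 m q) * ((‖p‖+m)^3)⁻¹ := by
  obtain ⟨t1, t2, t3⟩ := triangle_facts q p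
  have := real_key (1 / (8 * (2 * Real.pi) ^ 6)) m ‖p‖ ‖p+q‖ ‖q‖ (ω3 m p) (ω3 m (p+q)) (ω3 m q)
    (by positivity) hm (norm_nonneg _) (norm_nonneg _) (norm_nonneg _)
    (ω3_sq m p) (ω3_sq m (p+q)) (ω3_sq m q)
    (ω3_pos m hm p) (ω3_pos m hm (p+q)) (ω3_pos m hm q)
    (ω3_ge_norm m p) (ω3_ge_m m hm p) (ω3_le m hm p)
    (ω3_ge_norm m (p+q)) (ω3_ge_m m hm (p+q))
    t1 t2 t3
  unfold fC
  exact this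

lemma fC_continuous (m : ℝ) (hm : 0 < m) (q : R3) : Continuous (fC m q) := by
  have hc : Continuous (ω3 m) := ω3_continuous m
  have hshift : Continuous (fun p : R3 => ω3 m (p + q)) :=
    hc.comp (continuous_id.add continuous_const)
  unfold fC
  apply Continuous.div
  · exact continuous_const.mul (hc.add hshift)
  · exact ((hc.mul hshift).mul continuous_const).mul
      (((hc.add hshift).pow 2).sub continuous_const)
  · intro p
    exact (real_key_inst m hm q p).1.ne'

lemma ball_integral_eq (m : ℝ) (hm : 0 < m) (Λ : ℝ) :
    ∫ p in Metric.closedBall (0:R3) Λ, ((‖p‖+m)^3)⁻¹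
      = 3 * (volume (Metric.ball (0:R3) 1)).toReal * ∫ y in Set.Ioc 0 Λ, y^2 * ((y+m)^3)⁻¹ := by
  have h1 : ∫ p in Metric.closedBall (0:R3) Λ, ((‖p‖+m)^3)⁻¹
      = ∫ p : R3, Set.indicator (Metric.closedBall 0 Λ) (fun p : R3 => ((‖p‖+m)^3)⁻¹) p :=
    (integral_indicator (measurableSet_closedBall)).symm
  have h2 : ∀ p : R3, Set.indicator (Metric.closedBall 0 Λ) (fun p : R3 => ((‖p‖+m)^3)⁻¹) p
      = Set.indicator (Set.Iic Λ) (fun y : ℝ => ((y+m)^3)⁻¹) ‖p‖ := by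
    intro p
    by_cases hp : ‖p‖ ≤ Λ <;>
      simp [Set.indicator, Metric.mem_closedBall, dist_zero_right, Set.mem_Iic, hp]
  rw [h1]
  simp_rw [h2]
  rw [MeasureTheory.integral_fun_norm_addHaar volume
    (fun y : ℝ => Set.indicator (Set.Iic Λ) (fun y : ℝ => ((y+m)^3)⁻¹) y)]
  have hdim : Module.finrank ℝ R3 = 3 := finrank_euclideanSpace_fin
  rw [hdim]
  have h3 : ∀ y : ℝ, y^(3-1 : ℕ) • Set.indicator (Set.Iic Λ) (fun y : ℝ => ((y+m)^3)⁻¹) y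
      = Set.indicator (Set.Iic Λ) (fun y : ℝ => y^2 * ((y+m)^3)⁻¹) y := by
    intro y
    by_cases hy : y ∈ Set.Iic Λ <;> simp [Set.indicator, hy, smul_eq_mul]
  simp_rw [h3]
  rw [integral_indicator measurableSet_Iic, Measure.restrict_restrict measurableSet_Iic,
    Set.inter_comm, Set.Ioi_inter_Iic]
  rw [nsmul_eq_mul, smul_eq_mul, measureReal_def]
  ring

lemma radial_bounds (m : ℝ) (hm : 0 < m) :
    ∃ α β Λ₀ : ℝ, 0 < α ∧ 0 < β ∧ 2 ≤ Λ₀ ∧ ∀ Λ : ℝ, Λ₀ ≤ Λ →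
      α * Real.log Λ ≤ (∫ p in Metric.closedBall (0:R3) Λ, ((‖p‖+m)^3)⁻¹) ∧
      (∫ p in Metric.closedBall (0:R3) Λ, ((‖p‖+m)^3)⁻¹) ≤ β * Real.log Λ := by
  set V := (volume (Metric.ball (0:R3) 1)).toReal with hV
  have hV0 : 0 < V :=
    ENNReal.toReal_pos (Metric.measure_ball_pos volume _ one_pos).ne' measure_ball_lt_top.ne
  set r := max 1 m with hr
  have hr1 : 1 ≤ r := le_max_left _ _
  have hrm : m ≤ r := le_max_right _ _
  have hr0 : 0 < r := by linarith
  refine ⟨3*V/16, 3*V*(2 + |Real.log m| / Real.log 2), 2 + m + r^2,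
    by positivity, by positivity, by nlinarith, fun Λ hΛ => ?_⟩
  have hΛ2 : 2 ≤ Λ := by nlinarith
  have hΛm : m ≤ Λ := by nlinarith
  have hΛr2 : r^2 ≤ Λ := by nlinarith
  have hΛr : r ≤ Λ := by nlinarith
  have hΛ0 : 0 < Λ := by linarith
  have hlog2 : 0 < Real.log 2 := Real.log_pos one_lt_two
  have hlogΛ : Real.log 2 ≤ Real.log Λ := Real.log_le_log two_pos hΛ2
  have hlogΛ0 : 0 < Real.log Λ := lt_of_lt_of_le hlog2 hlogΛ
  rw [ball_integral_eq m hm Λ]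
  set J := ∫ y in Set.Ioc 0 Λ, y^2*((y+m)^3)⁻¹ with hJ
  -- integrability facts
  have hF : IntegrableOn (fun y : ℝ => y^2*((y+m)^3)⁻¹) (Set.Icc 0 Λ) := by
    apply ContinuousOn.integrableOn_compact isCompact_Icc
    apply ContinuousOn.mul ((continuous_pow 2).continuousOn)
    apply ContinuousOn.inv₀ (Continuous.continuousOn (by fun_prop))
    intro y hy
    have : (0:ℝ) ≤ y := hy.1
    positivity
  have hG : IntegrableOn (fun y : ℝ => (y+m)⁻¹) (Set.Icc 0 Λ) := by
    apply ContinuousOn.integrableOn_compact isCompact_Icc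
    apply ContinuousOn.inv₀ (Continuous.continuousOn (by fun_prop))
    intro y hy
    have : (0:ℝ) ≤ y := hy.1
    positivity
  have hH : IntegrableOn (fun y : ℝ => (8*y)⁻¹) (Set.Icc r Λ) := by
    apply ContinuousOn.integrableOn_compact isCompact_Icc
    apply ContinuousOn.inv₀ (Continuous.continuousOn (by fun_prop))
    intro y hy
    have : (0:ℝ) < y := lt_of_lt_of_le hr0 hy.1
    positivity
  -- upper bound for J
  have hup : J ≤ Real.log (Λ+m) - Real.log m := by
    have step1 : J ≤ ∫ y in Set.Ioc 0 Λ, (y+m)⁻¹ := by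
      apply setIntegral_mono_on (hF.mono_set Set.Ioc_subset_Icc_self)
        (hG.mono_set Set.Ioc_subset_Icc_self) measurableSet_Ioc
      intro y hy
      obtain ⟨hy0, hyΛ⟩ := hy
      have hym : 0 < y + m := by linarith
      calc y^2*((y+m)^3)⁻¹ ≤ (y+m)^2*((y+m)^3)⁻¹ := by
            apply mul_le_mul_of_nonneg_right (by nlinarith) (by positivity)
        _ = (y+m)⁻¹ := by
            have hne : y + m ≠ 0 := hym.ne'
            field_simp
    have step2 : (∫ y in Set.Ioc 0 Λ, (y+m)⁻¹) = Real.log (Λ+m) - Real.log m := by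
      rw [← intervalIntegral.integral_of_le (by linarith : (0:ℝ) ≤ Λ),
        intervalIntegral.integral_comp_add_right (fun y => y⁻¹) m, zero_add,
        integral_inv_of_pos hm (by linarith : (0:ℝ) < Λ + m),
        Real.log_div (by linarith) hm.ne']
    linarith [step1, step2.le]
  -- lower bound for J
  have hlow : Real.log Λ / 16 ≤ J := by
    have hsub : Set.Ioc r Λ ⊆ Set.Icc 0 Λ :=
      Set.Subset.trans Set.Ioc_subset_Icc_self (Set.Icc_subset_Icc_left hr0.le)
    have step0 : (∫ y in Set.Ioc r Λ, y^2*((y+m)^3)⁻¹) ≤ J := by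
      apply setIntegral_mono_set (hF.mono_set Set.Ioc_subset_Icc_self)
      · refine (ae_restrict_iff' measurableSet_Ioc).2 (Filter.Eventually.of_forall fun y hy => ?_)
        have h0 : (0:ℝ) < y := hy.1
        exact mul_nonneg (sq_nonneg y) (inv_nonneg.2 (pow_nonneg (by linarith) 3))
      · exact HasSubset.Subset.eventuallyLE (Set.Ioc_subset_Ioc_left hr0.le)
    have step1 : (∫ y in Set.Ioc r Λ, (8*y)⁻¹) ≤ ∫ y in Set.Ioc r Λ, y^2*((y+m)^3)⁻¹ := by
      apply setIntegral_mono_on (hH.mono_set Set.Ioc_subset_Icc_self) (hF.mono_set hsub)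
        measurableSet_Ioc
      intro y hy
      obtain ⟨hyr, hyΛ⟩ := hy
      have hy0 : (0:ℝ) < y := lt_of_lt_of_le hr0 hyr.le
      have hym : m ≤ y := le_trans hrm hyr.le
      have h1 : (y+m)^3 ≤ (2*y)^3 := pow_le_pow_left₀ (by linarith) (by linarith) 3
      have h2 : ((2*y)^3)⁻¹ ≤ ((y+m)^3)⁻¹ := inv_anti₀ (by positivity) h1
      calc (8*y)⁻¹ = y^2 * ((2*y)^3)⁻¹ := by field_simp; ring
        _ ≤ y^2*((y+m)^3)⁻¹ := mul_le_mul_of_nonneg_left h2 (sq_nonneg y)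
    have step2 : (∫ y in Set.Ioc r Λ, (8*y)⁻¹) = 8⁻¹ * (Real.log Λ - Real.log r) := by
      have : ∀ y : ℝ, (8*y)⁻¹ = 8⁻¹ * y⁻¹ := fun y => by rw [mul_inv]
      simp_rw [this]
      rw [← intervalIntegral.integral_of_le hΛr,
        intervalIntegral.integral_const_mul, integral_inv_of_pos hr0 hΛ0,
        Real.log_div hΛ0.ne' hr0.ne']
    have hlogr : 2 * Real.log r ≤ Real.log Λ := by
      have := Real.log_le_log (by positivity) hΛr2
      rwa [Real.log_pow, Nat.cast_ofNat] at this
    have hlogr0 : 0 ≤ Real.log r := Real.log_nonneg hr1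
    linarith [step0, step1, step2.ge]
  constructor
  · have := mul_le_mul_of_nonneg_left hlow (by positivity : (0:ℝ) ≤ 3*V)
    linarith
  · have hJup2 : J ≤ (2 + |Real.log m| / Real.log 2) * Real.log Λ := by
      have e1 : Real.log (Λ+m) ≤ 2*Real.log Λ := by
        have hle : Λ + m ≤ Λ^2 := by nlinarith
        have := Real.log_le_log (by linarith) hle
        rwa [Real.log_pow, Nat.cast_ofNat] at this
      have e2 : -Real.log m ≤ (|Real.log m|/Real.log 2) * Real.log Λ := by
        have h1 : -Real.log m ≤ |Real.log m| := neg_le_abs _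
        have h2 : |Real.log m| = (|Real.log m|/Real.log 2) * Real.log 2 := by
          field_simp
        have h3 := mul_le_mul_of_nonneg_left hlogΛ
          (by positivity : (0:ℝ) ≤ |Real.log m|/Real.log 2)
        linarith
      nlinarith [hup, e1, e2]
    have := mul_le_mul_of_nonneg_left hJup2 (by positivity : (0:ℝ) ≤ 3*V)
    linarith

theorem stmt14 (m : ℝ) (hm : 0 < m) (q : R3) :
    ∃ c C Λ₀ : ℝ, 0 < c ∧ c ≤ C ∧ 2 ≤ Λ₀ ∧
      ∀ Λ : ℝ, Λ₀ ≤ Λ →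
        c * Real.log Λ ≤ ∫ p in Metric.closedBall (0 : R3) Λ, fC m q p ∧
        (∫ p in Metric.closedBall (0 : R3) Λ, fC m q p) ≤ C * Real.log Λ := by
  have hQ0 : 0 < ω3 m q := ω3_pos m hm q
  have hs : 0 ≤ ‖q‖ := norm_nonneg q
  set c₀ : ℝ := (1 / (8 * (2 * Real.pi) ^ 6)) * m^3 / ((m+‖q‖) * (2*m+‖q‖)^2 * ω3 m q)
    with hc₀def
  set C₀ : ℝ := 8*(1 / (8 * (2 * Real.pi) ^ 6))*(2*m+‖q‖)*((‖q‖+2*m)*(3*m^2+‖q‖^2))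
    / (3*m^4*ω3 m q) with hC₀def
  have hc₀ : 0 < c₀ := by positivity
  have hC₀ : 0 < C₀ := by positivity
  obtain ⟨α, β, Λ₀, hα, hβ, hΛ₀2, hrad⟩ := radial_bounds m hm
  refine ⟨c₀*α, max (c₀*α) (C₀*β), Λ₀, by positivity, le_max_left _ _, hΛ₀2, fun Λ hΛ => ?_⟩
  have hΛ2 : 2 ≤ Λ := le_trans hΛ₀2 hΛ
  have hΛ0 : 0 < Λ := by linarith
  have hlog : 0 < Real.log Λ := Real.log_pos (by linarith)
  have hint_f : IntegrableOn (fC m q) (Metric.closedBall 0 Λ) :=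
    (fC_continuous m hm q).continuousOn.integrableOn_compact (isCompact_closedBall _ _)
  have hwcont : Continuous (fun p : R3 => ((‖p‖+m)^3)⁻¹) := by
    apply Continuous.inv₀ (by fun_prop)
    intro p
    have := norm_nonneg p
    positivity
  have hint_w : IntegrableOn (fun p : R3 => ((‖p‖+m)^3)⁻¹) (Metric.closedBall 0 Λ) :=
    hwcont.continuousOn.integrableOn_compact (isCompact_closedBall _ _)
  obtain ⟨hrlow, hrup⟩ := hrad Λ hΛ
  constructor
  · have mono1 : (∫ p in Metric.closedBall (0:R3) Λ, c₀ * ((‖p‖+m)^3)⁻¹)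
        ≤ ∫ p in Metric.closedBall (0:R3) Λ, fC m q p := by
      apply setIntegral_mono_on (hint_w.const_mul c₀) hint_f measurableSet_closedBall
      intro p _
      exact (real_key_inst m hm q p).2.1
    rw [integral_const_mul] at mono1
    have := mul_le_mul_of_nonneg_left hrlow hc₀.le
    calc c₀*α * Real.log Λ = c₀ * (α * Real.log Λ) := by ring
      _ ≤ c₀ * ∫ p in Metric.closedBall (0:R3) Λ, ((‖p‖+m)^3)⁻¹ := this
      _ ≤ _ := mono1
  · have mono2 : (∫ p in Metric.closedBall (0:R3) Λ, fC m q p)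
        ≤ ∫ p in Metric.closedBall (0:R3) Λ, C₀ * ((‖p‖+m)^3)⁻¹ := by
      apply setIntegral_mono_on hint_f (hint_w.const_mul C₀) measurableSet_closedBall
      intro p _
      exact (real_key_inst m hm q p).2.2
    rw [integral_const_mul] at mono2
    have h2 := mul_le_mul_of_nonneg_left hrup hC₀.le
    have h3 : C₀*β * Real.log Λ ≤ max (c₀*α) (C₀*β) * Real.log Λ :=
      mul_le_mul_of_nonneg_right (le_max_right _ _) hlog.le
    calc (∫ p in Metric.closedBall (0:R3) Λ, fC m q p)
        ≤ C₀ * ∫ p in Metric.closedBall (0:R3) Λ, ((‖p‖+m)^3)⁻¹ := mono2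
      _ ≤ C₀ * (β * Real.log Λ) := h2
      _ = C₀*β * Real.log Λ := by ring
      _ ≤ _ := h3
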